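/- Let Σ : C → C be a functor, S a monad on C with Kleisli adjunction J ⊣ V : C ⇄ Kl(S), and let Σ̄ : Kl(S) → Kl(S) be an extension of Σ (i.e., Σ̄ ∘ J = J ∘ Σ), with corresponding distributive law λ : ΣS ⇒ SΣ. Then the Kleisli adjunction lifts to an adjunction J̄ ⊣ V̄ between Alg(Σ) and Alg(Σ̄), where J̄(Q, δ : ΣQ → Q) = (Q, J(δ) : Σ̄Q ⇸ Q) and V̄(Q, γ : Σ̄Q ⇸ Q) = (SQ, V(γ) ∘ λ_Q : ΣSQ → SQ), and these adjunctions commute with the forgetful functors (the forgetful functor Alg(Σ) → C composed with J̄-source data matches the square J ∘ U = U ∘ J̄ and V ∘ U = U ∘ V̄). -/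

import Mathlib

open CategoryTheory CategoryTheory.Limits

universe v u

namespace TreeAutPaper

variable {C : Type u} [Category.{v} C]

/-- The unit axiom of a distributive law `λ : ΣS ⇒ SΣ`. -/
def DistLawUnit (T : Monad C) (Sg : C ⥤ C)
    (l : (T : C ⥤ C) ⋙ Sg ⟶ Sg ⋙ (T : C ⥤ C)) : Prop :=
  ∀ X : C, Sg.map (T.η.app X) ≫ l.app X = T.η.app (Sg.obj X)

/-- The multiplication axiom of a distributive law `λ : ΣS ⇒ SΣ`. -/
def DistLawMult (T : Monad C) (Sg : C ⥤ C)
    (l : (T : C ⥤ C) ⋙ Sg ⟶ Sg ⋙ (T : C ⥤ C)) : Prop :=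
  ∀ X : C, Sg.map (T.μ.app X) ≫ l.app X =
    l.app ((T : C ⥤ C).obj X) ≫ (T : C ⥤ C).map (l.app X) ≫ T.μ.app (Sg.obj X)

/-- The extension `Σ̄ : Kl(S) ⥤ Kl(S)` of `Σ` corresponding to a distributive law
`λ : ΣS ⇒ SΣ`: it acts as `Σ` on objects and sends `f : X ⇸ Y` to `λ_Y ∘ Σf`. -/
def kleisliExtension (T : Monad C) (Sg : C ⥤ C)
    (l : (T : C ⥤ C) ⋙ Sg ⟶ Sg ⋙ (T : C ⥤ C))
    (hη : DistLawUnit T Sg l) (hμ : DistLawMult T Sg l) :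
    Kleisli T ⥤ Kleisli T where
  obj X := Kleisli.mk T (Sg.obj X.of)
  map {X Y} f := Kleisli.Hom.mk (Sg.map f.of ≫ l.app Y.of :
    Sg.obj X.of ⟶ (T : C ⥤ C).obj (Sg.obj Y.of))
  map_id X := Kleisli.hom_ext (hη X.of)
  map_comp {X Y Z} f g := by
    apply Kleisli.hom_ext
    show Sg.map (f.of ≫ (T : C ⥤ C).map g.of ≫ T.μ.app Z.of) ≫ l.app Z.of =
      (Sg.map f.of ≫ l.app Y.of) ≫ (T : C ⥤ C).map (Sg.map g.of ≫ l.app Z.of) ≫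
        T.μ.app (Sg.obj Z.of)
    have hnat : Sg.map ((T : C ⥤ C).map g.of) ≫ l.app ((T : C ⥤ C).obj Z.of) =
        l.app Y.of ≫ (T : C ⥤ C).map (Sg.map g.of) := l.naturality g.of
    rw [Functor.map_comp, Functor.map_comp, Category.assoc, Category.assoc, hμ Z.of,
      ← Category.assoc (Sg.map ((T : C ⥤ C).map g.of)), hnat]
    simp [Functor.map_comp]


section Lift

variable (T : Monad C) (Sg : C ⥤ C)
    (l : (T : C ⥤ C) ⋙ Sg ⟶ Sg ⋙ (T : C ⥤ C))
    (hη : DistLawUnit T Sg l) (hμ : DistLawMult T Sg l)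

/-- `η ≫ T g ≫ μ = g` for any `g : X ⟶ T Y`. -/
lemma eta_comp {X Y : C} (g : X ⟶ (T : C ⥤ C).obj Y) :
    T.η.app X ≫ (T : C ⥤ C).map g ≫ T.μ.app Y = g := by
  rw [← T.η.naturality_assoc g]
  simp

include hη in
/-- The lifted left adjoint `J̄`. -/
def liftedJ : Endofunctor.Algebra Sg ⥤ Endofunctor.Algebra (kleisliExtension T Sg l hη hμ) where
  obj Q := ⟨Kleisli.mk T Q.a, (Kleisli.Adjunction.toKleisli T).map Q.str⟩
  map {Q₀ Q₁} f :=
    { f := (Kleisli.Adjunction.toKleisli T).map f.f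
      h := by
        apply Kleisli.hom_ext
        show (Sg.map (f.f ≫ T.η.app Q₁.a) ≫ l.app Q₁.a) ≫
            (T : C ⥤ C).map (Q₁.str ≫ T.η.app Q₁.a) ≫ T.μ.app Q₁.a =
          (Q₀.str ≫ T.η.app Q₀.a) ≫ (T : C ⥤ C).map (f.f ≫ T.η.app Q₁.a) ≫ T.μ.app Q₁.a
        rw [Functor.map_comp]
        slice_lhs 2 3 => rw [hη Q₁.a]
        rw [Category.assoc, eta_comp T (Q₁.str ≫ T.η.app Q₁.a), Category.assoc,
          eta_comp T (f.f ≫ T.η.app Q₁.a), ← Category.assoc, f.h]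
        simp
        }
  map_id Q := by ext; exact congrArg Kleisli.Hom.of ((Kleisli.Adjunction.toKleisli T).map_id Q.a)
  map_comp f g := by ext; exact congrArg Kleisli.Hom.of ((Kleisli.Adjunction.toKleisli T).map_comp f.f g.f)

include hμ in
/-- The key computation: `Sg(V f) ≫ λ = λ ≫ V(Σ̄ f)` for a Kleisli morphism `f`. -/
lemma lift_key {X Y : C} (f : X ⟶ (T : C ⥤ C).obj Y) :
    Sg.map ((T : C ⥤ C).map f ≫ T.μ.app Y) ≫ l.app Y =
      l.app X ≫ (T : C ⥤ C).map (Sg.map f ≫ l.app Y) ≫ T.μ.app (Sg.obj Y) := by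
  have hnat : Sg.map ((T : C ⥤ C).map f) ≫ l.app ((T : C ⥤ C).obj Y) =
      l.app X ≫ (T : C ⥤ C).map (Sg.map f) := l.naturality f
  rw [Functor.map_comp, Category.assoc, hμ Y, ← Category.assoc (Sg.map ((T : C ⥤ C).map f)),
    hnat]
  simp [Functor.map_comp]

/-- The lifted right adjoint `V̄`. -/
def liftedV : Endofunctor.Algebra (kleisliExtension T Sg l hη hμ) ⥤ Endofunctor.Algebra Sg where
  obj Q := ⟨(T : C ⥤ C).obj Q.a.of, l.app Q.a.of ≫ (T : C ⥤ C).map Q.str.of ≫ T.μ.app Q.a.of⟩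
  map {Q₀ Q₁} f :=
    { f := (T : C ⥤ C).map f.f.of ≫ T.μ.app Q₁.a.of
      h := by
        have hVf : (Kleisli.Adjunction.fromKleisli T).map
              ((kleisliExtension T Sg l hη hμ).map f.f) ≫
              (Kleisli.Adjunction.fromKleisli T).map Q₁.str =
            (Kleisli.Adjunction.fromKleisli T).map Q₀.str ≫
              (Kleisli.Adjunction.fromKleisli T).map f.f := by
          rw [← Functor.map_comp, ← Functor.map_comp, f.h]
        have hVf' : (T : C ⥤ C).map (Sg.map f.f.of ≫ l.app Q₁.a.of) ≫ T.μ.app (Sg.obj Q₁.a.of) ≫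
              (T : C ⥤ C).map Q₁.str.of ≫ T.μ.app Q₁.a.of =
            (T : C ⥤ C).map Q₀.str.of ≫ T.μ.app Q₀.a.of ≫
              (T : C ⥤ C).map f.f.of ≫ T.μ.app Q₁.a.of := by
          have h := hVf
          simp only [Kleisli.Adjunction.fromKleisli_map, Category.assoc] at h
          exact (Category.assoc _ _ _).symm.trans (h.trans (Category.assoc _ _ _))
        clear hVf
        have h1 := lift_key T Sg l hμ f.f.of
        show Sg.map ((T : C ⥤ C).map f.f.of ≫ T.μ.app Q₁.a.of) ≫
            l.app Q₁.a.of ≫ (T : C ⥤ C).map Q₁.str.of ≫ T.μ.app Q₁.a.of =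
          (l.app Q₀.a.of ≫ (T : C ⥤ C).map Q₀.str.of ≫ T.μ.app Q₀.a.of) ≫
            (T : C ⥤ C).map f.f.of ≫ T.μ.app Q₁.a.of
        rw [← Category.assoc, h1]
        simp only [Category.assoc] at hVf' ⊢
        rw [hVf']; rfl }
  map_id Q := by
    ext
    exact (Kleisli.Adjunction.fromKleisli T).map_id Q.a
  map_comp f g := by
    ext
    have := (Kleisli.Adjunction.fromKleisli T).map_comp f.f g.f
    exact this

/-- The lifted adjunction `J̄ ⊣ V̄`. -/
def liftedAdj : liftedJ T Sg l hη hμ ⊣ liftedV T Sg l hη hμ := by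
  refine Adjunction.mkOfHomEquiv
    { homEquiv := fun Q R =>
        { toFun := fun f =>
            { f := f.f.of
              h := by
                have hf : ((Sg.map f.f.of ≫ l.app R.a.of) ≫
                      (T : C ⥤ C).map R.str.of ≫ T.μ.app R.a.of : _ ⟶ _) =
                    (Q.str ≫ T.η.app Q.a) ≫ (T : C ⥤ C).map f.f.of ≫ T.μ.app R.a.of :=
                  congrArg Kleisli.Hom.of f.h
                show Sg.map f.f.of ≫ l.app R.a.of ≫ (T : C ⥤ C).map R.str.of ≫ T.μ.app R.a.of =
                  Q.str ≫ f.f.of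
                simp only [Category.assoc] at hf
                rw [eta_comp T (X := Q.a) (Y := R.a.of) f.f.of] at hf
                exact hf }
          invFun := fun f =>
            { f := Kleisli.Hom.mk f.f
              h := by
                have hf : Sg.map f.f ≫ l.app R.a.of ≫ (T : C ⥤ C).map R.str.of ≫
                    T.μ.app R.a.of = Q.str ≫ f.f := f.h
                apply Kleisli.hom_ext
                show ((Sg.map f.f ≫ l.app R.a.of) ≫
                    (T : C ⥤ C).map R.str.of ≫ T.μ.app R.a.of : _ ⟶ _) =
                  (Q.str ≫ T.η.app Q.a) ≫ (T : C ⥤ C).map f.f ≫ T.μ.app R.a.of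
                simp only [Category.assoc]
                exact (Category.assoc _ _ _).trans (hf.trans
                  (congrArg (Q.str ≫ ·) (eta_comp T (X := Q.a) (Y := R.a.of) f.f).symm)) }
          left_inv := fun f => rfl
          right_inv := fun f => rfl }
      homEquiv_naturality_left_symm := ?_
      homEquiv_naturality_right := ?_ }
  · intro Q' Q R f g
    ext
    show (f.f ≫ g.f : Q'.a ⟶ (T : C ⥤ C).obj R.a.of) =
      (f.f ≫ T.η.app Q.a) ≫ (T : C ⥤ C).map g.f ≫ T.μ.app R.a.of
    exact (congrArg (f.f ≫ ·) (eta_comp T (X := Q.a) (Y := R.a.of) g.f).symm).trans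
      (Category.assoc _ _ _).symm
  · intro Q R R' f g
    ext
    rfl

theorem liftedJ_forget :
    liftedJ T Sg l hη hμ ⋙ Endofunctor.Algebra.forget (kleisliExtension T Sg l hη hμ) =
      Endofunctor.Algebra.forget Sg ⋙ Kleisli.Adjunction.toKleisli T := rfl

theorem liftedV_forget :
    liftedV T Sg l hη hμ ⋙ Endofunctor.Algebra.forget Sg =
      Endofunctor.Algebra.forget (kleisliExtension T Sg l hη hμ) ⋙
        Kleisli.Adjunction.fromKleisli T := rfl

end Lift

/-- The Kleisli adjunction `J ⊣ V : C ⇄ Kl(S)` lifts to an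
adjunction `J̄ ⊣ V̄` between `Alg(Σ)` and `Alg(Σ̄)`, where `Σ̄` is the extension of `Σ`
corresponding to the distributive law `λ`; on objects `J̄(Q,δ) = (Q, J(δ))` and
`V̄(Q,γ) = (SQ, V(γ) ∘ λ_Q)`, and the lifted adjunction commutes with the forgetful
functors. -/
theorem kleisli_adjunction_lifts
    {C : Type u} [Category.{v} C] (T : Monad C) (Sg : C ⥤ C)
    (l : (T : C ⥤ C) ⋙ Sg ⟶ Sg ⋙ (T : C ⥤ C))
    (hη : DistLawUnit T Sg l) (hμ : DistLawMult T Sg l) :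
    ∃ (Jb : Endofunctor.Algebra Sg ⥤ Endofunctor.Algebra (kleisliExtension T Sg l hη hμ))
      (Vb : Endofunctor.Algebra (kleisliExtension T Sg l hη hμ) ⥤ Endofunctor.Algebra Sg)
      (_adj : Jb ⊣ Vb),
      -- on objects, `J̄(Q,δ) = (Q, J(δ))` :
      (∀ Q : Endofunctor.Algebra Sg,
        Jb.obj Q = ⟨Kleisli.mk T Q.a, (Kleisli.Adjunction.toKleisli T).map Q.str⟩) ∧
      -- on objects, `V̄(Q,γ) = (SQ, V(γ) ∘ λ_Q)` :
      (∀ Q : Endofunctor.Algebra (kleisliExtension T Sg l hη hμ),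
        Vb.obj Q = ⟨(T : C ⥤ C).obj Q.a.of,
          l.app Q.a.of ≫ (T : C ⥤ C).map Q.str.of ≫ T.μ.app Q.a.of⟩) ∧
      -- the lifted adjunction commutes with the forgetful functors:
      (Jb ⋙ Endofunctor.Algebra.forget (kleisliExtension T Sg l hη hμ) =
        Endofunctor.Algebra.forget Sg ⋙ Kleisli.Adjunction.toKleisli T) ∧
      (Vb ⋙ Endofunctor.Algebra.forget Sg =
        Endofunctor.Algebra.forget (kleisliExtension T Sg l hη hμ) ⋙
          Kleisli.Adjunction.fromKleisli T) := by
  exact ⟨liftedJ T Sg l hη hμ, liftedV T Sg l hη hμ, liftedAdj T Sg l hη hμ,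
    fun Q => rfl, fun Q => rfl, liftedJ_forget T Sg l hη hμ, liftedV_forget T Sg l hη hμ⟩

end TreeAutPaper
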